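/- arXiv:2508.01154 — 3 statements merged into one kernel-verified Lean document; each statement's English description precedes it below -/
import Mathlib

section
/- Let a, b, c, e > 0 with a·e < 2·b·c, and let p, q be reals with p + q > 1 and q > 0, p + q - 1 > 0. Then ∫₀^∞ dx/((ax+b)^p (cx+e)^q) = a^{q-1}/(b^{p+q-1} c^q (p+q-1)) · ₂F₁(q, p+q-1; p+q; 1 - ae/(bc)). -/
open MeasureTheory Real Set Filter

noncomputable def poch (q : ℝ) (n : ℕ) : ℝ := Polynomial.eval q (ascPochhammer ℝ n)

lemma poch_zero (q : ℝ) : poch q 0 = 1 := by simp [poch]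

lemma poch_succ (q : ℝ) (n : ℕ) : poch q (n+1) = poch q n * (q + n) :=
  ascPochhammer_succ_eval n q

lemma poch_pos {q : ℝ} (hq : 0 < q) (n : ℕ) : 0 < poch q n :=
  ascPochhammer_pos n q hq

lemma poch_shift (c : ℝ) (n : ℕ) : poch (c-1) n * (c - 1 + n) = (c-1) * poch c n := by
  induction n with
  | zero => simp [poch_zero]
  | succ n ih =>
    rw [poch_succ, poch_succ]
    push_cast
    push_cast at ih
    linear_combination (c + n) * ih

lemma summable_aux {q : ℝ} (hq : 0 < q) {r : ℝ} (hr : |r| < 1) (j : ℕ) :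
    Summable (fun n => poch q (n + j) / n.factorial * r ^ n) := by
  set R : ℝ := (|r| + 1) / 2 with hR
  have hR0 : 0 < R := by positivity
  have hrR : |r| < R := by rw [hR]; linarith
  have hR1 : R < 1 := by rw [hR]; linarith
  set r' : ℝ := (R + 1) / 2 with hr'
  have hRr' : R < r' := by rw [hr']; linarith
  have hr'1 : r' < 1 := by rw [hr']; linarith
  have hv : Summable (fun n => poch q (n + j) / n.factorial * R ^ n) := by
    apply summable_of_ratio_norm_eventually_le hr'1
    have htend : Tendsto (fun n : ℕ => (q + (n + j)) / (n + 1) * R) atTop (nhds R) := by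
      have h1 : Tendsto (fun n : ℕ => (q + (n + j)) / (n + 1)) atTop (nhds 1) := by
        have : (fun n : ℕ => (q + (n + j)) / (n + 1)) =
            fun n : ℕ => 1 + (q + j - 1) * (1 / (n + 1)) := by
          funext n
          have : (n:ℝ) + 1 ≠ 0 := by positivity
          field_simp
          ring
        rw [this]
        have := tendsto_one_div_add_atTop_nhds_zero_nat (𝕜 := ℝ)
        have h2 : Tendsto (fun n : ℕ => (q + j - 1) * (1 / (n + 1))) atTop (nhds 0) := by
          simpa using this.const_mul (q + j - 1)
        simpa using tendsto_const_nhds.add h2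
      simpa using h1.mul_const R
    have hev : ∀ᶠ n : ℕ in atTop, (q + (n + j)) / (n + 1) * R ≤ r' :=
      htend.eventually_le_const hRr'
    filter_upwards [hev] with n hn
    have hp : 0 < poch q (n + j) / n.factorial * R ^ n := by
      have := poch_pos hq (n + j)
      have := Nat.factorial_pos n
      positivity
    have hp' : 0 < poch q (n + 1 + j) / (n+1).factorial * R ^ (n+1) := by
      have := poch_pos hq (n + 1 + j)
      have := Nat.factorial_pos (n+1)
      positivity
    rw [Real.norm_of_nonneg hp.le, Real.norm_of_nonneg hp'.le]
    have key : poch q (n + 1 + j) / (n+1).factorial * R ^ (n+1)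
        = (poch q (n + j) / n.factorial * R ^ n) * ((q + (n + j)) / (n + 1) * R) := by
      have h1 : poch q (n + 1 + j) = poch q (n + j) * (q + (n + j)) := by
        have := poch_succ q (n + j)
        rw [show n + 1 + j = (n + j) + 1 by ring, this]
        push_cast
        ring
      rw [h1, Nat.factorial_succ]
      have hf : (n.factorial : ℝ) ≠ 0 := Nat.cast_ne_zero.2 n.factorial_pos.ne'
      have hn1 : ((n:ℝ) + 1) ≠ 0 := by positivity
      push_cast
      field_simp
      ring
    rw [key]
    calc (poch q (n + j) / n.factorial * R ^ n) * ((q + (n + j)) / (n + 1) * R)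
        ≤ (poch q (n + j) / n.factorial * R ^ n) * r' := by
          apply mul_le_mul_of_nonneg_left hn hp.le
      _ = r' * (poch q (n + j) / n.factorial * R ^ n) := by ring
  apply Summable.of_norm_bounded hv
  intro n
  have hp := poch_pos hq (n + j)
  have hf := Nat.factorial_pos n
  rw [Real.norm_eq_abs, abs_mul, abs_div, abs_pow, abs_of_pos hp,
    Nat.abs_cast]
  apply mul_le_mul_of_nonneg_left _ (by positivity)
  exact pow_le_pow_left₀ (abs_nonneg r) hrR.le n

lemma factorial_shift (q y : ℝ) (n : ℕ) :
    poch q (n+1) / (n+1).factorial * ((n+1 : ℕ) * y ^ n) = poch q (n+1) / n.factorial * y ^ n := by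
  have hf : (n.factorial : ℝ) ≠ 0 := Nat.cast_ne_zero.2 n.factorial_pos.ne'
  have hn1 : ((n:ℝ) + 1) ≠ 0 := by positivity
  rw [Nat.factorial_succ]
  push_cast
  field_simp

lemma binomial_series {q : ℝ} (hq : 0 < q) {u : ℝ} (hu : |u| < 1) :
    ∑' n : ℕ, poch q n / n.factorial * u ^ n = (1 - u) ^ (-q) := by
  set f : ℝ → ℝ := fun y => ∑' n : ℕ, poch q n / n.factorial * y ^ n with hf
  set A : ℝ → ℝ := fun y => ∑' n : ℕ, poch q (n+1) / n.factorial * y ^ n with hA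
  -- derivative of f
  have hderiv : ∀ y : ℝ, |y| < 1 → HasDerivAt f (A y) y := by
    intro y hy
    set R : ℝ := (|y| + 1) / 2 with hR
    have hR0 : 0 < R := by positivity
    have hyR : |y| < R := by rw [hR]; linarith
    have hR1 : |R| < 1 := by rw [abs_of_pos hR0, hR]; linarith
    have hmem : y ∈ Ioo (-R) R := by
      constructor <;> [linarith [neg_abs_le y]; linarith [le_abs_self y]]
    have h0mem : (0:ℝ) ∈ Ioo (-R) R := by constructor <;> simp [hR0] <;> linarith
    have key : HasDerivAt f
        (∑' n : ℕ, poch q n / n.factorial * ((n:ℝ) * y ^ (n-1))) y := by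
      apply hasDerivAt_tsum_of_isPreconnected
        (u := fun n => poch q (n+1) / n.factorial * R ^ n * R⁻¹)
        ((summable_aux hq hR1 1).mul_right R⁻¹) isOpen_Ioo
        (Convex.isPreconnected (convex_Ioo _ _))
        (g := fun n y => poch q n / n.factorial * y ^ n)
        (fun n y' _ => (hasDerivAt_pow n y').const_mul _) ?_ h0mem ?_ hmem
      · rintro n y' ⟨h1, h2⟩
        have hy' : |y'| ≤ R := abs_le.2 ⟨h1.le, h2.le⟩
        match n with
        | 0 =>
          have hp1 : 0 < poch q 1 := poch_pos hq 1
          simp only [Nat.cast_zero, zero_mul, mul_zero, norm_zero]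
          positivity
        | Nat.succ m =>
          have hpp := poch_pos hq (m+1)
          have hpp2 := poch_pos hq (m+2)
          have hfm : (0:ℝ) < (m+1).factorial := by exact_mod_cast (m+1).factorial_pos
          rw [Real.norm_eq_abs, abs_mul, abs_mul, abs_div, abs_of_pos hpp, Nat.abs_cast,
            Nat.abs_cast, abs_pow]
          have step1 : poch q (m+1) / (m+1).factorial * (((m+1:ℕ):ℝ) * |y'| ^ m)
              ≤ poch q (m+1) / (m+1).factorial * (((m+1:ℕ):ℝ) * R ^ m) := by
            apply mul_le_mul_of_nonneg_left _ (by positivity)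
            apply mul_le_mul_of_nonneg_left _ (by positivity)
            exact pow_le_pow_left₀ (abs_nonneg _) hy' m
          refine step1.trans ?_
          have e2 : poch q (m+1+1) / (m+1).factorial * R ^ (m+1) * R⁻¹
              = poch q (m+2) / (m+1).factorial * R ^ m := by
            rw [show m+1+1 = m+2 from rfl, pow_succ]
            field_simp
          rw [e2]
          have hple : poch q (m+1) * ((m:ℝ)+1) ≤ poch q (m+2) := by
            have hs := poch_succ q (m+1)
            rw [show m+1+1 = m+2 from rfl] at hs
            rw [hs]
            push_cast
            nlinarith [hpp, hq]
          calc poch q (m+1) / (m+1).factorial * (((m+1:ℕ):ℝ) * R ^ m)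
              = (poch q (m+1) * ((m:ℝ)+1)) / (m+1).factorial * R ^ m := by push_cast; ring
            _ ≤ poch q (m+2) / (m+1).factorial * R ^ m := by gcongr
      · exact summable_aux hq (by simp : |(0:ℝ)| < 1) 0
    -- identify the sum with A y
    have hsum : (∑' n : ℕ, poch q n / n.factorial * ((n:ℝ) * y ^ (n-1))) = A y := by
      have hsummable : Summable (fun n => poch q n / n.factorial * ((n:ℝ) * y ^ (n-1))) := by
        rw [← summable_nat_add_iff 1]
        apply Summable.congr (summable_aux hq hy 1)
        intro n
        simp only [Nat.add_sub_cancel]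
        exact (factorial_shift q y n).symm
      rw [hsummable.tsum_eq_zero_add]
      simp only [Nat.cast_zero, zero_mul, mul_zero, zero_add, Nat.add_sub_cancel]
      apply tsum_congr
      intro n
      push_cast
      rw [← factorial_shift q y n]
      push_cast
      ring
    rw [← hsum]; exact key
  -- the ODE identity
  have hode : ∀ y : ℝ, |y| < 1 → (1 - y) * A y = q * f y := by
    intro y hy
    have hS0 := summable_aux hq hy 0
    have hS1 := summable_aux hq hy 1
    simp only [Nat.add_zero] at hS0
    have h1 : A y - q * f y = y * A y := by
      have hqf : q * f y = ∑' n : ℕ, q * (poch q n / n.factorial * y ^ n) := by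
        rw [hf, tsum_mul_left]
      have hsub : A y - q * f y
          = ∑' n : ℕ, (poch q (n+1) / n.factorial * y ^ n
              - q * (poch q n / n.factorial * y ^ n)) := by
        rw [hqf, hA, hS1.tsum_sub (hS0.mul_left q)]
      have hterm : ∀ n : ℕ, poch q (n+1) / n.factorial * y ^ n
          - q * (poch q n / n.factorial * y ^ n)
          = poch q n * n / n.factorial * y ^ n := by
        intro n
        rw [poch_succ]
        have hfne : (n.factorial : ℝ) ≠ 0 := Nat.cast_ne_zero.2 n.factorial_pos.ne'
        field_simp
        ring
      rw [hsub, tsum_congr hterm]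
      have hshift : Summable (fun n : ℕ => poch q n * n / n.factorial * y ^ n) := by
        rw [← summable_nat_add_iff 1]
        apply Summable.congr (hS1.mul_right y)
        intro n
        have := factorial_shift q y n
        push_cast
        rw [Nat.factorial_succ]
        push_cast
        have hfne : (n.factorial : ℝ) ≠ 0 := Nat.cast_ne_zero.2 n.factorial_pos.ne'
        have h1 : ((n:ℝ)+1) ≠ 0 := by positivity
        field_simp
        ring
      rw [hshift.tsum_eq_zero_add]
      simp only [Nat.cast_zero, mul_zero, zero_div, zero_mul, zero_add, pow_zero]
      have : y * A y = ∑' n : ℕ, (poch q (n+1) / n.factorial * y ^ n) * y := by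
        rw [hA, tsum_mul_right]; ring
      rw [this]
      apply tsum_congr
      intro n
      have hfne : (n.factorial : ℝ) ≠ 0 := Nat.cast_ne_zero.2 n.factorial_pos.ne'
      have h1 : ((n:ℝ)+1) ≠ 0 := by positivity
      rw [Nat.factorial_succ]
      push_cast
      field_simp
      ring
    linarith [h1]
  -- constancy of G
  set G : ℝ → ℝ := fun y => (1 - y) ^ q * f y with hG
  have hGderiv : ∀ y ∈ Ioo (-1:ℝ) 1, HasDerivAt G 0 y := by
    rintro y ⟨hy1, hy2⟩
    have hy : |y| < 1 := abs_lt.2 ⟨hy1, hy2⟩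
    have h1y : (0:ℝ) < 1 - y := by linarith
    have hbase : HasDerivAt (fun y : ℝ => 1 - y) (-1) y := by
      simpa using (hasDerivAt_id y).const_sub 1
    have hpow := hbase.rpow_const (p := q) (Or.inl h1y.ne')
    have := hpow.mul (hderiv y hy)
    refine HasDerivAt.congr_deriv this ?_
    have e1 : (1 - y) ^ q = (1 - y) ^ (q - 1) * (1 - y) := by
      rw [← Real.rpow_add_one h1y.ne' (q-1)]; ring_nf
    rw [e1]
    have hthis := hode y hy
    linear_combination ((1 - y) ^ (q - 1)) * hthis
  have hGconst : G u = G 0 := by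
    have hconv : Convex ℝ (Ioo (-1:ℝ) 1) := convex_Ioo _ _
    have hdiff : DifferentiableOn ℝ G (Ioo (-1:ℝ) 1) := fun y hy =>
      ((hGderiv y hy).differentiableAt).differentiableWithinAt
    apply hconv.is_const_of_fderivWithin_eq_zero hdiff
    · intro y hy
      rw [fderivWithin_of_isOpen isOpen_Ioo hy]
      have hF : HasFDerivAt G (ContinuousLinearMap.smulRight (1 : ℝ →L[ℝ] ℝ) (0:ℝ)) y :=
        hGderiv y hy
      rw [hF.fderiv]
      ext x
      simp
    · exact abs_lt.1 hu
    · constructor <;> norm_num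
  have hf0 : f 0 = 1 := by
    have hrfl : f 0 = ∑' n : ℕ, poch q n / n.factorial * (0:ℝ) ^ n := rfl
    rw [hrfl, tsum_eq_single 0]
    · simp [poch_zero]
    · intro n hn
      simp [zero_pow hn]
  have hG0 : G 0 = 1 := by simp [hG, hf0]
  have h1u : (0:ℝ) < 1 - u := by have := abs_lt.1 hu; linarith [this.2]
  have hGu : (1 - u) ^ q * f u = 1 := hGconst.trans hG0
  have hne : (1 - u) ^ q ≠ 0 := (Real.rpow_pos_of_pos h1u q).ne'
  have h2 : f u = ((1 - u) ^ q)⁻¹ := by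
    field_simp
    linear_combination hGu
  rw [Real.rpow_neg h1u.le]
  exact h2

/-- The Gauss hypergeometric function `₂F₁(a,b;c;z)`, defined by its power series
`∑ (a)ₙ(b)ₙ/((c)ₙ n!) zⁿ` (with `(q)ₙ` the rising Pochhammer symbol). -/
noncomputable def hyp2F1 (a b c z : ℝ) : ℝ :=
  ∑' n : ℕ,
    (Polynomial.eval a (ascPochhammer ℝ n) * Polynomial.eval b (ascPochhammer ℝ n) /
      (Polynomial.eval c (ascPochhammer ℝ n) * (n.factorial : ℝ))) * z ^ n

/-- Pure rpow algebra. -/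
lemma aux_alg {a b c p q t u : ℝ} (ha : 0 < a) (hb : 0 < b) (hc : 0 < c)
    (ht : 0 < t) (hu : 0 < u) :
    (b / (a * t^2)) * (1 / ((b/t)^p * ((b*c)*u/(a*t))^q))
      = (a^(q-1) / (b^(p+q-1) * c^q)) * (t^(p+q-2) * u^(-q)) := by
  have e1 : (b/t)^p = b^p/t^p := Real.div_rpow hb.le ht.le p
  have e2 : ((b*c)*u/(a*t))^q = (b^q*c^q*u^q)/(a^q*t^q) := by
    rw [Real.div_rpow (by positivity) (by positivity), Real.mul_rpow (by positivity) hu.le,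
      Real.mul_rpow hb.le hc.le, Real.mul_rpow ha.le ht.le]
  have e3 : a^(q-1) = a^q/a := Real.rpow_sub_one ha.ne' q
  have e4 : b^(p+q-1) = b^p*b^q/b := by
    rw [show p+q-1 = (p+q)-1 by ring, Real.rpow_sub_one hb.ne', Real.rpow_add hb]
  have e5 : t^(p+q-2) = t^p*t^q/t^2 := by
    rw [show p+q-2 = (p+q)-((2:ℕ):ℝ) by norm_num, Real.rpow_sub ht, Real.rpow_add ht,
      Real.rpow_natCast]
  have e6 : u^(-q) = (u^q)⁻¹ := by rw [Real.rpow_neg hu.le]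
  rw [e1, e2, e3, e4, e5, e6]
  have p1 : (0:ℝ) < a^q := Real.rpow_pos_of_pos ha q
  have p2 : (0:ℝ) < b^p := Real.rpow_pos_of_pos hb p
  have p3 : (0:ℝ) < b^q := Real.rpow_pos_of_pos hb q
  have p4 : (0:ℝ) < c^q := Real.rpow_pos_of_pos hc q
  have p5 : (0:ℝ) < t^p := Real.rpow_pos_of_pos ht p
  have p6 : (0:ℝ) < t^q := Real.rpow_pos_of_pos ht q
  have p7 : (0:ℝ) < u^q := Real.rpow_pos_of_pos hu q
  field_simp

set_option maxHeartbeats 1000000 in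
/-- For `a,b,c,e > 0` with `ae < 2bc` and `p+q > 1`, `q > 0`, `p+q-1 > 0`:
`∫₀^∞ dx/((ax+b)^p (cx+e)^q)
  = a^(q-1)/(b^(p+q-1) c^q (p+q-1)) · ₂F₁(q, p+q-1; p+q; 1 - ae/(bc))`. -/
theorem integral_inv_rpow_mul_rpow (a b c e p q : ℝ)
    (ha : 0 < a) (hb : 0 < b) (hc : 0 < c) (he : 0 < e)
    (hae : a * e < 2 * (b * c)) (hpq : 1 < p + q) (hq : 0 < q) (hpq' : 0 < p + q - 1) :
    ∫ x in Ioi (0:ℝ), 1 / ((a * x + b) ^ p * (c * x + e) ^ q)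
      = a ^ (q - 1) / (b ^ (p + q - 1) * c ^ q * (p + q - 1)) *
        hyp2F1 q (p + q - 1) (p + q) (1 - a * e / (b * c)) := by
  have hbc : 0 < b * c := mul_pos hb hc
  set z : ℝ := 1 - a * e / (b * c) with hzdef
  have hz1 : z < 1 := by
    rw [hzdef]
    have : 0 < a * e / (b * c) := by positivity
    linarith
  have hz2 : -1 < z := by
    rw [hzdef]
    have : a * e / (b * c) < 2 := (div_lt_iff₀ hbc).2 (by linarith)
    linarith
  have hz : |z| < 1 := abs_lt.2 ⟨hz2, hz1⟩
  -- the substitution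
  set φ : ℝ → ℝ := fun t => b * (1 - t) / (a * t) with hφ
  set φ' : ℝ → ℝ := fun t => -(b / (a * t^2)) with hφ'
  have himg : φ '' Ioo 0 1 = Ioi 0 := by
    ext x
    constructor
    · rintro ⟨t, ⟨ht0, ht1⟩, rfl⟩
      have : 0 < b * (1 - t) / (a * t) := by
        apply div_pos (by nlinarith) (by positivity)
      simpa [hφ] using this
    · intro hx
      rw [mem_Ioi] at hx
      refine ⟨b / (a * x + b), ⟨by positivity, ?_⟩, ?_⟩
      · rw [div_lt_one (by positivity)]
        nlinarith
      · simp only [hφ]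
        have h1 : a * x + b ≠ 0 := by positivity
        field_simp
        ring
  have hInj : InjOn φ (Ioo 0 1) := by
    rintro t1 ⟨h1, _⟩ t2 ⟨h2, _⟩ heq
    simp only [hφ] at heq
    have e1 : t1 ≠ 0 := h1.ne'
    have e2 : t2 ≠ 0 := h2.ne'
    field_simp at heq
    have h5 : a * b * (t2 - t1) = 0 := by linear_combination (a * b) * heq
    have h6 : t2 - t1 = 0 := by
      rcases mul_eq_zero.1 h5 with h | h
      · exact absurd h (by positivity)
      · exact h
    linarith
  have hderiv : ∀ t ∈ Ioo (0:ℝ) 1, HasDerivWithinAt φ (φ' t) (Ioo 0 1) t := by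
    rintro t ⟨ht0, ht1⟩
    have h1 : HasDerivAt (fun t : ℝ => b / a * t⁻¹ - b / a) (b / a * (-(t^2)⁻¹)) t := by
      exact ((hasDerivAt_inv ht0.ne').const_mul (b/a)).sub_const _
    have h2 : HasDerivAt (fun t : ℝ => b / a * t⁻¹ - b / a) (φ' t) t := by
      convert h1 using 1
      simp only [hφ']
      field_simp
    apply (h2.hasDerivWithinAt).congr
    · rintro s ⟨hs0, hs1⟩
      simp only [hφ]
      field_simp
    · simp only [hφ]
      field_simp
  -- change of variables
  rw [show Ioi (0:ℝ) = φ '' Ioo 0 1 from himg.symm,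
    integral_image_eq_integral_abs_deriv_smul measurableSet_Ioo hderiv hInj]
  -- pointwise simplification
  set Cz : ℝ := a^(q-1) / (b^(p+q-1) * c^q) with hCz
  have hpointwise : EqOn (fun t => |φ' t| • (1 / ((a * φ t + b) ^ p * (c * φ t + e) ^ q)))
      (fun t => Cz * (t^(p+q-2) * (1-z*t)^(-q))) (Ioo 0 1) := by
    rintro t ⟨ht0, ht1⟩
    have hzt : 0 < 1 - z * t := by
      have h1 : z * t ≤ |z| * t := by
        apply mul_le_mul_of_nonneg_right (le_abs_self z) ht0.le
      have h2 : |z| * t < 1 := by nlinarith [abs_nonneg z]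
      linarith
    have hA : a * φ t + b = b / t := by
      simp only [hφ]
      field_simp
      ring
    have hB : c * φ t + e = (b*c) * (1 - z*t) / (a*t) := by
      simp only [hφ, hzdef]
      field_simp
      ring
    have habs : |φ' t| = b / (a * t^2) := by
      simp only [hφ']
      rw [abs_neg, abs_of_pos (by positivity)]
    simp only [smul_eq_mul, habs, hA, hB]
    exact aux_alg ha hb hc ht0 hzt
  rw [setIntegral_congr_fun measurableSet_Ioo hpointwise]
  -- series expansion of the integral
  set F : ℕ → ℝ → ℝ := fun n t => (poch q n / n.factorial * z^n) * t^(p+q-2+n) with hF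
  have hsn : ∀ n : ℕ, (-1:ℝ) < p+q-2+n := by
    intro n
    have : (0:ℝ) ≤ n := Nat.cast_nonneg n
    linarith
  have hFint : ∀ n : ℕ, IntegrableOn (F n) (Ioo 0 1) := by
    intro n
    apply Integrable.const_mul
    exact (intervalIntegrable_iff_integrableOn_Ioo_of_le zero_le_one).1
      (intervalIntegral.intervalIntegrable_rpow' (hsn n))
  have hrint : ∀ n : ℕ, ∫ t in Ioo (0:ℝ) 1, t ^ (p+q-2+n) = (p+q-1+n)⁻¹ := by
    intro n
    rw [← integral_Ioc_eq_integral_Ioo, ← intervalIntegral.integral_of_le zero_le_one,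
      integral_rpow (Or.inl (hsn n))]
    have h1 : p+q-2+n+1 = p+q-1+n := by ring
    have h2 : p+q-2+n+1 ≠ 0 := by rw [h1]; positivity
    rw [Real.one_rpow, Real.zero_rpow h2, h1]
    ring
  have hnorm : ∀ n : ℕ, ∫ t in Ioo (0:ℝ) 1, ‖F n t‖
      = (poch q n / n.factorial * |z|^n) * (p+q-1+n)⁻¹ := by
    intro n
    have : EqOn (fun t => ‖F n t‖)
        (fun t => (poch q n / n.factorial * |z|^n) * t^(p+q-2+n)) (Ioo 0 1) := by
      rintro t ⟨ht0, ht1⟩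
      simp only [hF, Real.norm_eq_abs, abs_mul, abs_div, abs_pow]
      rw [abs_of_pos (poch_pos hq n), Nat.abs_cast,
        abs_of_pos (Real.rpow_pos_of_pos ht0 _)]
    rw [setIntegral_congr_fun measurableSet_Ioo this, integral_const_mul, hrint n]
  have hFsum : Summable (fun n : ℕ => ∫ t in Ioo (0:ℝ) 1, ‖F n t‖) := by
    have hSg : Summable (fun n : ℕ => poch q n / n.factorial * |z|^n * (p+q-1)⁻¹) := by
      simpa using (summable_aux hq (by rwa [abs_abs] : |(|z|)| < 1) 0).mul_right (p+q-1)⁻¹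
    refine Summable.of_nonneg_of_le ?_ ?_ hSg
    · intro n
      rw [hnorm n]
      have := poch_pos hq n
      have h3 : (0:ℝ) < p+q-1+n := by have : (0:ℝ) ≤ n := Nat.cast_nonneg n; linarith
      positivity
    · intro n
      rw [hnorm n]
      have h3 : (0:ℝ) < p+q-1+n := by have : (0:ℝ) ≤ n := Nat.cast_nonneg n; linarith
      have hterm : (0:ℝ) ≤ poch q n / n.factorial * |z|^n := by
        have := poch_pos hq n
        have := n.factorial_pos
        positivity
      apply mul_le_mul_of_nonneg_left _ hterm
      apply inv_anti₀ hpq'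
      have : (0:ℝ) ≤ n := Nat.cast_nonneg n
      linarith
  have hexp : ∫ t in Ioo (0:ℝ) 1, Cz * (t^(p+q-2) * (1-z*t)^(-q))
      = Cz * ∑' n : ℕ, (poch q n / n.factorial * z^n) * (p+q-1+n)⁻¹ := by
    rw [integral_const_mul]
    congr 1
    have hswap := integral_tsum_of_summable_integral_norm hFint hFsum
    have hpt : EqOn (fun t => t^(p+q-2) * (1-z*t)^(-q))
        (fun t => ∑' n : ℕ, F n t) (Ioo 0 1) := by
      rintro t ⟨ht0, ht1⟩
      have hzt : |z*t| < 1 := by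
        rw [abs_mul, abs_of_pos ht0]
        nlinarith [abs_nonneg z, abs_lt.1 hz]
      simp only
      rw [← binomial_series hq hzt, ← tsum_mul_left]
      apply tsum_congr
      intro n
      simp only [hF]
      rw [mul_pow, Real.rpow_add ht0, Real.rpow_natCast]
      ring
    rw [setIntegral_congr_fun measurableSet_Ioo hpt, ← hswap]
    apply tsum_congr
    intro n
    simp only [hF]
    rw [integral_const_mul, hrint n]
  rw [hexp]
  -- identify with hyp2F1
  have hc'pos : 0 < p + q := by linarith
  have hhyp : hyp2F1 q (p+q-1) (p+q) z
      = (p+q-1) * ∑' n : ℕ, (poch q n / n.factorial * z^n) * (p+q-1+n)⁻¹ := by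
    rw [hyp2F1, ← tsum_mul_left]
    apply tsum_congr
    intro n
    have hshift := poch_shift (p+q) n
    have h1 : (0:ℝ) < p+q-1+n := by have : (0:ℝ) ≤ n := Nat.cast_nonneg n; linarith
    have h2 : (0:ℝ) < poch (p+q) n := poch_pos hc'pos n
    have h3 : (n.factorial : ℝ) ≠ 0 := Nat.cast_ne_zero.2 n.factorial_pos.ne'
    have h4 : poch (p+q-1) n = (p+q-1) * poch (p+q) n / (p+q-1+n) := by
      rw [eq_div_iff h1.ne']
      have : p + q - 1 = (p+q) - 1 := by ring
      rw [this]
      linear_combination hshift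
    show (poch q n * poch (p+q-1) n / (poch (p+q) n * n.factorial)) * z^n = _
    rw [h4]
    field_simp
  rw [hhyp, hCz]
  have hb1 : (0:ℝ) < b^(p+q-1) := Real.rpow_pos_of_pos hb _
  have hc1 : (0:ℝ) < c^q := Real.rpow_pos_of_pos hc _
  field_simp
end

section
/- If X and Y are i.i.d. Gamma(α, λ) random variables, then E[|X−Y|/(X+Y)] = Γ(α + 1/2)/(√π · α · Γ(α)). -/
open MeasureTheory Real ProbabilityTheory

open Set

/-- 1D change of variables for lintegral. -/
lemma lint_image {s : Set ℝ} {f f' : ℝ → ℝ} (hs : MeasurableSet s)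
    (hf' : ∀ x ∈ s, HasDerivWithinAt f (f' x) s x) (hf : InjOn f s) (g : ℝ → ENNReal) :
    ∫⁻ x in f '' s, g x = ∫⁻ x in s, ENNReal.ofReal |f' x| * g (f x) := by
  simpa only [ContinuousLinearMap.det_toSpanSingleton] using
    MeasureTheory.lintegral_image_eq_lintegral_abs_det_fderiv_mul volume hs
      (fun x hx => (hf' x hx).hasFDerivWithinAt) hf g

/-- Gamma integral, lintegral form. -/
lemma lint_gamma {a r : ℝ} (ha : 0 < a) (hr : 0 < r) :
    ∫⁻ x in Ioi (0:ℝ), ENNReal.ofReal (x ^ (a-1) * exp (-(r * x)))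
      = ENNReal.ofReal ((1 / r) ^ a * Real.Gamma a) := by
  rw [← ofReal_integral_eq_lintegral_ofReal, integral_rpow_mul_exp_neg_mul_Ioi ha hr]
  · have := integrableOn_rpow_mul_exp_neg_mul_rpow (p := 1) (s := a - 1) (b := r)
      (by linarith) zero_lt_one hr
    refine (this.congr_fun (fun x hx => ?_) measurableSet_Ioi)
    simp [rpow_one]
  · filter_upwards [self_mem_ae_restrict measurableSet_Ioi] with x hx
    have : (0:ℝ) < x := hx
    positivity

lemma lint_rpow {a : ℝ} (ha : 0 < a) :
    ∫⁻ x in Ioo (0:ℝ) 1, ENNReal.ofReal (x ^ (a-1)) = ENNReal.ofReal (1 / a) := by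
  have hint : IntervalIntegrable (fun x : ℝ => x ^ (a-1)) volume 0 1 :=
    intervalIntegral.intervalIntegrable_rpow' (by linarith)
  have h2 : IntegrableOn (fun x : ℝ => x ^ (a-1)) (Ioo 0 1) volume :=
    (hint.1).mono_set Ioo_subset_Ioc_self
  rw [← ofReal_integral_eq_lintegral_ofReal h2]
  · have : ∫ x in Ioo (0:ℝ) 1, x ^ (a-1) = ∫ x in (0:ℝ)..1, x ^ (a-1) := by
      rw [intervalIntegral.integral_of_le zero_le_one, integral_Ioc_eq_integral_Ioo]
    rw [this, integral_rpow (Or.inl (by linarith))]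
    rw [zero_rpow (by linarith), sub_add_cancel, one_rpow]
    norm_num
  · filter_upwards [self_mem_ae_restrict measurableSet_Ioo] with x hx
    have : (0:ℝ) < x := hx.1
    positivity

noncomputable def mo (u : ℝ) : ℝ := (1+u)/(1-u)

lemma mo_hasDeriv {u : ℝ} (hu : u ∈ Ioo (-1:ℝ) 1) :
    HasDerivAt mo (2/(1-u)^2) u := by
  have h : (1:ℝ) - u ≠ 0 := by have := hu.2; intro h; rw [sub_eq_zero] at h; linarith
  have h1 : HasDerivAt (fun u : ℝ => 1+u) 1 u := by
    simpa using (hasDerivAt_id u).const_add 1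
  have h2 : HasDerivAt (fun u : ℝ => 1-u) (-1) u := by
    exact (hasDerivAt_id u).const_sub 1
  have := h1.div h2 h
  rw [show (1 * (1 - u) - (1 + u) * -1) / (1 - u) ^ 2 = 2/(1-u)^2 by ring] at this
  exact this

lemma mo_inj : InjOn mo (Ioo (-1:ℝ) 1) := by
  intro u hu v hv h
  have h1 : (1:ℝ) - u > 0 := by have := hu.2; linarith
  have h2 : (1:ℝ) - v > 0 := by have := hv.2; linarith
  unfold mo at h
  field_simp at h
  linarith

lemma mo_image : mo '' (Ioo (-1:ℝ) 1) = Ioi (0:ℝ) := by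
  ext t
  constructor
  · rintro ⟨u, hu, rfl⟩
    have h1 : (0:ℝ) < 1 + u := by have := hu.1; linarith
    have h2 : (0:ℝ) < 1 - u := by have := hu.2; linarith
    exact div_pos h1 h2
  · intro ht
    have ht' : (0:ℝ) < t := ht
    refine ⟨(t-1)/(t+1), ⟨?_, ?_⟩, ?_⟩
    · rw [lt_div_iff₀ (by linarith : (0:ℝ) < t + 1)]
      linarith
    · rw [div_lt_iff₀ (by linarith : (0:ℝ) < t + 1)]
      linarith
    · unfold mo
      rw [div_eq_iff]
      · field_simp
        ring
      · intro h
        rw [sub_eq_zero] at h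
        have : t + 1 ≠ 0 := by linarith
        field_simp at h
        linarith

lemma sq_image : (fun u : ℝ => 1 - u^2) '' (Ioo (0:ℝ) 1) = Ioo (0:ℝ) 1 := by
  ext w
  constructor
  · rintro ⟨u, hu, rfl⟩
    obtain ⟨h1, h2⟩ := hu
    refine ⟨by dsimp only; nlinarith, by dsimp only; nlinarith⟩
  · intro hw
    obtain ⟨hw1, hw2⟩ := hw
    refine ⟨Real.sqrt (1 - w), ⟨Real.sqrt_pos.2 (by linarith), ?_⟩, ?_⟩
    · have : Real.sqrt (1-w) < Real.sqrt 1 :=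
        Real.sqrt_lt_sqrt (by linarith) (by linarith)
      simpa using this
    · dsimp only
      rw [Real.sq_sqrt (by linarith)]
      ring

lemma sq_inj : InjOn (fun u : ℝ => 1 - u^2) (Ioo (0:ℝ) 1) := by
  intro u hu v hv h
  dsimp only at h
  nlinarith [hu.1, hv.1]

lemma alg {α u : ℝ} (hu : u ∈ Ioo (-1:ℝ) 1) :
    |2/(1-u)^2| * (mo u ^ (α-1) * |1 - mo u| * ((1 + mo u) ^ (2*α+1))⁻¹)
      = 2 ^ (1-2*α) * (|u| * ((1-u^2) ^ (α-1))) := by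
  obtain ⟨hu1, hu2⟩ := hu
  have ha : (0:ℝ) < 1 - u := by linarith
  have hb : (0:ℝ) < 1 + u := by linarith
  have e1 : 1 - mo u = -2*u/(1-u) := by unfold mo; field_simp; ring
  have e2 : 1 + mo u = 2/(1-u) := by unfold mo; field_simp; ring
  have e3 : |1 - mo u| = 2*|u|/(1-u) := by
    rw [e1, abs_div, abs_of_pos ha, show -2*u = -(2*u) by ring, abs_neg, abs_mul]
    norm_num
  have e4 : mo u ^ (α-1) = (1+u)^(α-1) / (1-u)^(α-1) := by
    unfold mo; rw [Real.div_rpow hb.le ha.le]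
  have e5 : ((1 + mo u) ^ (2*α+1))⁻¹ = (1-u)^(2*α+1) / 2^(2*α+1) := by
    rw [e2, Real.div_rpow (by norm_num) ha.le]
    rw [inv_div]
  have e6 : (1-u)^(2*α+1) = (1-u)^(α-1) * (1-u)^(α-1) * (1-u)^3 := by
    rw [← Real.rpow_natCast (1-u) 3, ← Real.rpow_add ha, ← Real.rpow_add ha]
    norm_num
    ring_nf
  have e7 : ((1-u^2):ℝ) ^ (α-1) = (1-u)^(α-1) * (1+u)^(α-1) := by
    rw [show (1:ℝ)-u^2 = (1-u)*(1+u) by ring, Real.mul_rpow ha.le hb.le]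
  have e8 : (2:ℝ)^(1-2*α) * 2^(2*α+1) = 4 := by
    rw [← Real.rpow_add two_pos, show 1-2*α+(2*α+1) = (2:ℝ) by ring, Real.rpow_two]
    norm_num
  have h2 : (0:ℝ) < (2:ℝ)^(2*α+1) := Real.rpow_pos_of_pos two_pos _
  have ha1 : (0:ℝ) < (1-u)^(α-1) := Real.rpow_pos_of_pos ha _
  rw [e3, e4, e5, e6, e7, abs_of_pos (by positivity : (0:ℝ) < 2/(1-u)^2)]
  rw [show (2:ℝ)^(1-2*α) = 4 / 2^(2*α+1) by rw [← e8]; field_simp]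
  field_simp
  ring

lemma Msub {α : ℝ} (hα : 0 < α) :
    2 * ∫⁻ u in Ioo (0:ℝ) 1, ENNReal.ofReal (u * (1-u^2) ^ (α-1))
      = ENNReal.ofReal (1/α) := by
  have h := lint_image (s := Ioo (0:ℝ) 1) (f := fun u : ℝ => 1 - u^2)
      (f' := fun u => -(2*u^(2-1))) measurableSet_Ioo
      (fun u _ => (((hasDerivAt_pow 2 u).const_sub (1:ℝ))).hasDerivWithinAt) sq_inj
      (fun x => ENNReal.ofReal (x ^ (α-1)))
  rw [sq_image] at h
  rw [← lint_rpow hα, h, ← lintegral_const_mul' _ _ (by norm_num : (2:ENNReal) ≠ ⊤)]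
  refine setLIntegral_congr_fun measurableSet_Ioo (fun u hu => ?_)
  obtain ⟨h1, h2⟩ := hu
  rw [show (2:ℕ)-1 = 1 from rfl, pow_one]
  rw [← ENNReal.ofReal_ofNat, ← ENNReal.ofReal_mul (by norm_num), ← ENNReal.ofReal_mul (by positivity)]
  rw [abs_of_nonpos (by nlinarith : -(2 * u) ≤ 0)]
  congr 1
  ring

lemma neg_image : (fun u : ℝ => -u) '' Ioo (0:ℝ) 1 = Ioo (-1:ℝ) 0 := by
  ext x
  constructor
  · rintro ⟨y, hy, rfl⟩
    obtain ⟨h1, h2⟩ := hy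
    simp only [Set.mem_Ioo]
    constructor <;> [linarith; linarith]
  · intro hx
    obtain ⟨h1, h2⟩ := hx
    exact ⟨-x, Set.mem_Ioo.2 ⟨by linarith, by linarith⟩, by simp⟩

lemma Mfull {α : ℝ} (hα : 0 < α) :
    ∫⁻ u in Ioo (-1:ℝ) 1, ENNReal.ofReal (|u| * (1-u^2) ^ (α-1))
      = ENNReal.ofReal (1/α) := by
  have hset : Ioo (-1:ℝ) 1 = Ioo (-1:ℝ) 0 ∪ Ico (0:ℝ) 1 :=
    (Set.Ioo_union_Ico_eq_Ioo (by norm_num) (by norm_num)).symm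
  rw [hset, lintegral_union measurableSet_Ico
      (by rw [Set.disjoint_left]; rintro x ⟨_, h0⟩ ⟨h0', _⟩; linarith)]
  have hIco : ∫⁻ u in Ico (0:ℝ) 1, ENNReal.ofReal (|u| * (1-u^2) ^ (α-1))
      = ∫⁻ u in Ioo (0:ℝ) 1, ENNReal.ofReal (u * (1-u^2) ^ (α-1)) := by
    rw [← setLIntegral_congr MeasureTheory.Ioo_ae_eq_Ico]
    refine setLIntegral_congr_fun measurableSet_Ioo (fun u hu => ?_)
    rw [abs_of_pos hu.1]
  have hneg : ∫⁻ u in Ioo (-1:ℝ) 0, ENNReal.ofReal (|u| * (1-u^2) ^ (α-1))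
      = ∫⁻ u in Ioo (0:ℝ) 1, ENNReal.ofReal (u * (1-u^2) ^ (α-1)) := by
    rw [← neg_image, lint_image measurableSet_Ioo
        (fun u _ => (hasDerivAt_neg u).hasDerivWithinAt) neg_injective.injOn]
    refine setLIntegral_congr_fun measurableSet_Ioo (fun u hu => ?_)
    obtain ⟨h1, h2⟩ := hu
    rw [abs_neg, abs_neg, abs_of_pos h1, neg_sq, abs_one, ENNReal.ofReal_one, one_mul]
  rw [hIco, hneg, ← two_mul, Msub hα]

lemma Tint {α : ℝ} (hα : 0 < α) :
    ∫⁻ t in Ioi (0:ℝ), ENNReal.ofReal (t ^ (α-1) * |1-t| * ((1+t) ^ (2*α+1))⁻¹)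
      = ENNReal.ofReal (2 ^ (1-2*α) * (1/α)) := by
  rw [← mo_image, lint_image measurableSet_Ioo
      (fun u hu => (mo_hasDeriv hu).hasDerivWithinAt) mo_inj]
  have step : ∀ u ∈ Ioo (-1:ℝ) 1,
      ENNReal.ofReal |2/(1-u)^2| * ENNReal.ofReal
          (mo u ^ (α-1) * |1 - mo u| * ((1 + mo u) ^ (2*α+1))⁻¹)
        = ENNReal.ofReal (2 ^ (1-2*α)) * ENNReal.ofReal (|u| * (1-u^2) ^ (α-1)) := by
    intro u hu
    rw [← ENNReal.ofReal_mul (abs_nonneg _), alg hu,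
      ENNReal.ofReal_mul (by positivity : (0:ℝ) ≤ 2 ^ (1-2*α))]
  rw [setLIntegral_congr_fun measurableSet_Ioo step,
    lintegral_const_mul' _ _ ENNReal.ofReal_ne_top, Mfull hα,
    ← ENNReal.ofReal_mul (by positivity)]

lemma scale_image {x : ℝ} (hx : 0 < x) : (fun t : ℝ => x*t) '' Ioi 0 = Ioi (0:ℝ) := by
  ext y
  constructor
  · rintro ⟨t, ht, rfl⟩
    exact mul_pos hx ht
  · intro hy
    exact ⟨y/x, div_pos hy hx, by field_simp⟩

lemma inner_int {α l : ℝ} (hα : 0 < α) (hl : 0 < l) {x : ℝ} (hx : 0 < x) :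
    ∫⁻ y in Ioi (0:ℝ), gammaPDF α l y * ENNReal.ofReal (|x - y| / (x + y))
      = ∫⁻ t in Ioi (0:ℝ), ENNReal.ofReal
          ((l^α/Real.Gamma α) * x^α * (t^(α-1) * exp (-(l*x*t)) * (|1-t| / (1+t)))) := by
  have h := lint_image (s := Ioi (0:ℝ)) (f := fun t : ℝ => x*t)
      (f' := fun _ => x) measurableSet_Ioi
      (fun t _ => by simpa using ((hasDerivAt_id t).const_mul x).hasDerivWithinAt)
      (fun a _ b _ h => by
        have := mul_left_cancel₀ hx.ne' h
        exact this)
      (fun y => gammaPDF α l y * ENNReal.ofReal (|x - y| / (x + y)))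
  rw [scale_image hx] at h
  rw [h]
  refine setLIntegral_congr_fun measurableSet_Ioi (fun t ht => ?_)
  have ht' : (0:ℝ) < t := ht
  have hxt : (0:ℝ) ≤ x * t := by positivity
  rw [gammaPDF_of_nonneg hxt, abs_of_pos hx,
    ← ENNReal.ofReal_mul (by positivity), ← ENNReal.ofReal_mul (by positivity)]
  congr 1
  have e1 : (x*t) ^ (α-1) = x^(α-1) * t^(α-1) := Real.mul_rpow hx.le ht'.le
  have e2 : |x - x*t| / (x + x*t) = |1-t| / (1+t) := by
    rw [show x - x*t = x*(1-t) by ring, show x + x*t = x*(1+t) by ring,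
      abs_mul, abs_of_pos hx, mul_div_mul_left _ _ hx.ne']
  have e3 : x * x^(α-1) = x^α := by
    nth_rewrite 1 [← Real.rpow_one x]
    rw [← Real.rpow_add hx]
    norm_num
  rw [e2]
  rw [e1]
  rw [show -(l*(x*t)) = -(l*x*t) by ring]
  linear_combination (l^α/Real.Gamma α * t^(α-1) * rexp (-(l*x*t)) * (|1-t| / (1+t))) * e3

lemma final_arith {α l : ℝ} (hα : 0 < α) (hl : 0 < l) :
    (l^α / Real.Gamma α)^2 * Real.Gamma (2*α) * (1/l)^(2*α) * (2^(1-2*α) * (1/α))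
      = Real.Gamma (α+1/2) / (Real.sqrt π * α * Real.Gamma α) := by
  have hG : 0 < Real.Gamma α := Real.Gamma_pos_of_pos hα
  have hsp : 0 < Real.sqrt π := Real.sqrt_pos.2 Real.pi_pos
  have hl2 : (l^α)^2 * (1/l)^(2*α) = 1 := by
    rw [sq, ← Real.rpow_add hl, one_div, Real.inv_rpow hl.le,
      show α+α = 2*α by ring, mul_inv_cancel₀ (Real.rpow_pos_of_pos hl _).ne']
  have dup := Real.Gamma_mul_Gamma_add_half α
  have h2 : (0:ℝ) < 2^(1-2*α) := Real.rpow_pos_of_pos two_pos _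
  have hil : (0:ℝ) < (1/l)^(2*α) := Real.rpow_pos_of_pos (by positivity) _
  set Ga := Real.Gamma α
  set Gh := Real.Gamma (α+1/2)
  set G2 := Real.Gamma (2*α)
  set s2 := (2:ℝ)^(1-2*α)
  set il := (1/l:ℝ)^(2*α)
  set sp := Real.sqrt π
  rw [div_pow]
  field_simp
  linear_combination (G2*s2*sp)*hl2 - dup

lemma main_lint {α l : ℝ} (hα : 0 < α) (hl : 0 < l) :
    ∫⁻ x in Ioi (0:ℝ), gammaPDF α l x *
        ∫⁻ y in Ioi (0:ℝ), gammaPDF α l y * ENNReal.ofReal (|x - y| / (x + y))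
      = ENNReal.ofReal (Real.Gamma (α+1/2) / (Real.sqrt π * α * Real.Gamma α)) := by
  have hG : 0 < Real.Gamma α := Real.Gamma_pos_of_pos hα
  set C := l^α / Real.Gamma α with hC
  have hC0 : 0 ≤ C := by positivity
  set G : ℝ → ℝ → ℝ := fun x t =>
    (C^2 * (t^(α-1) * (|1-t| / (1+t)))) * (x^(2*α-1) * exp (-((l*(1+t)) * x))) with hGdef
  have step1 : ∀ x ∈ Ioi (0:ℝ),
      gammaPDF α l x * ∫⁻ y in Ioi (0:ℝ), gammaPDF α l y * ENNReal.ofReal (|x - y| / (x + y))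
        = ∫⁻ t in Ioi (0:ℝ), ENNReal.ofReal (G x t) := by
    intro x hx
    have hx' : (0:ℝ) < x := hx
    rw [inner_int hα hl hx', gammaPDF_of_nonneg hx'.le,
      ← lintegral_const_mul' _ _ ENNReal.ofReal_ne_top]
    refine setLIntegral_congr_fun measurableSet_Ioi (fun t ht => ?_)
    have ht' : (0:ℝ) < t := ht
    rw [← ENNReal.ofReal_mul (by positivity)]
    congr 1
    have ex : x^(α-1) * x^α = x^(2*α-1) := by
      rw [← Real.rpow_add hx']; ring_nf
    have ee : rexp (-(l*x)) * rexp (-(l*x*t)) = rexp (-((l*(1+t))*x)) := by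
      rw [← Real.exp_add]; congr 1; ring
    simp only [hGdef, hC]
    rw [← ex, ← ee]
    ring
  rw [setLIntegral_congr_fun measurableSet_Ioi step1]
  rw [lintegral_lintegral_swap ?hmeas]
  case hmeas =>
    apply Measurable.aemeasurable
    simp only [hGdef, Function.uncurry]
    fun_prop
  set K := C^2 * Real.Gamma (2*α) * (1/l)^(2*α) with hK
  have hK0 : 0 ≤ K := by positivity
  have step3 : ∀ t ∈ Ioi (0:ℝ), ∫⁻ x in Ioi (0:ℝ), ENNReal.ofReal (G x t)
      = ENNReal.ofReal (K * (t^(α-1) * |1-t| * ((1+t)^(2*α+1))⁻¹)) := by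
    intro t ht
    have ht' : (0:ℝ) < t := ht
    have h1t : (0:ℝ) < 1 + t := by linarith
    have hr : (0:ℝ) < l * (1+t) := by positivity
    simp only [hGdef]
    have hA : (0:ℝ) ≤ C^2 * (t^(α-1) * (|1-t| / (1+t))) := by positivity
    calc ∫⁻ x in Ioi (0:ℝ), ENNReal.ofReal
            ((C^2 * (t^(α-1) * (|1-t| / (1+t)))) * (x^(2*α-1) * exp (-((l*(1+t)) * x))))
        = ENNReal.ofReal (C^2 * (t^(α-1) * (|1-t| / (1+t)))) *
            ∫⁻ x in Ioi (0:ℝ), ENNReal.ofReal (x^(2*α-1) * exp (-((l*(1+t)) * x))) := by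
          rw [← lintegral_const_mul' _ _ ENNReal.ofReal_ne_top]
          refine setLIntegral_congr_fun measurableSet_Ioi (fun x hx => ?_)
          have hx' : (0:ℝ) < x := hx
          rw [← ENNReal.ofReal_mul hA]
      _ = ENNReal.ofReal (C^2 * (t^(α-1) * (|1-t| / (1+t)))) *
            ENNReal.ofReal ((1/(l*(1+t)))^(2*α) * Real.Gamma (2*α)) := by
          rw [lint_gamma (by linarith : (0:ℝ) < 2*α) hr]
      _ = ENNReal.ofReal (K * (t^(α-1) * |1-t| * ((1+t)^(2*α+1))⁻¹)) := by
          rw [← ENNReal.ofReal_mul hA]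
          congr 1
          have e1 : (1/(l*(1+t)))^(2*α) = (1/l)^(2*α) * ((1+t)^(2*α))⁻¹ := by
            rw [show 1/(l*(1+t)) = (1/l) * (1+t)⁻¹ by field_simp,
              Real.mul_rpow (by positivity) (by positivity), Real.inv_rpow h1t.le]
          have e2 : (1+t)^(2*α+1) = (1+t)^(2*α) * (1+t) := by
            rw [Real.rpow_add h1t, Real.rpow_one]
          have hp : (0:ℝ) < (1+t)^(2*α) := Real.rpow_pos_of_pos h1t _
          rw [e1, e2, hK]
          field_simp
  rw [setLIntegral_congr_fun measurableSet_Ioi step3]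
  have hφ : ∀ t ∈ Ioi (0:ℝ), ENNReal.ofReal (K * (t^(α-1) * |1-t| * ((1+t)^(2*α+1))⁻¹))
      = ENNReal.ofReal K * ENNReal.ofReal (t^(α-1) * |1-t| * ((1+t)^(2*α+1))⁻¹) := by
    intro t ht
    rw [← ENNReal.ofReal_mul hK0]
  rw [setLIntegral_congr_fun measurableSet_Ioi hφ,
    lintegral_const_mul' _ _ ENNReal.ofReal_ne_top, Tint hα,
    ← ENNReal.ofReal_mul hK0]
  congr 1
  rw [hK, hC]
  exact final_arith hα hl

lemma gamma_Iic_zero {α l : ℝ} : gammaMeasure α l (Iic 0) = 0 := by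
  rw [gammaMeasure, withDensity_apply _ measurableSet_Iic,
    ← setLIntegral_congr MeasureTheory.Iio_ae_eq_Iic]
  exact lintegral_gammaPDF_of_nonpos le_rfl

lemma restrict_pdf_lint {α l : ℝ} (h : ℝ → ENNReal) :
    ∫⁻ x, gammaPDF α l x * h x ∂volume = ∫⁻ x in Ioi (0:ℝ), gammaPDF α l x * h x := by
  rw [← lintegral_add_compl (fun x => gammaPDF α l x * h x) measurableSet_Ioi]
  have : ∫⁻ x in (Ioi (0:ℝ))ᶜ, gammaPDF α l x * h x = 0 := by
    rw [compl_Ioi, ← setLIntegral_congr MeasureTheory.Iio_ae_eq_Iic]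
    rw [setLIntegral_congr_fun measurableSet_Iio
      (fun x (hx : x < 0) => by rw [gammaPDF_of_neg hx, zero_mul])]
    simp
  rw [this, add_zero]

/-- For i.i.d. `X, Y ~ Gamma(α, λ)`, `E[|X−Y|/(X+Y)] = Γ(α+1/2)/(√π·α·Γ(α))`
(the Gini coefficient of the gamma distribution). -/
theorem gini_gamma {Ω : Type*} [MeasurableSpace Ω]
    (P : Measure Ω) [IsProbabilityMeasure P] (X Y : Ω → ℝ)
    (hX : Measurable X) (hY : Measurable Y)
    (α l : ℝ) (hα : 0 < α) (hl : 0 < l)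
    (hXlaw : Measure.map X P = gammaMeasure α l)
    (hYlaw : Measure.map Y P = gammaMeasure α l)
    (hindep : IndepFun X Y P) :
    ∫ ω, |X ω - Y ω| / (X ω + Y ω) ∂P
      = Real.Gamma (α + 1/2) / (Real.sqrt π * α * Real.Gamma α) := by
  have hG : 0 < Real.Gamma α := Real.Gamma_pos_of_pos hα
  haveI : IsProbabilityMeasure (gammaMeasure α l) := isProbabilityMeasure_gammaMeasure hα hl
  have hjoint : Measure.map (fun ω => (X ω, Y ω)) P
      = (gammaMeasure α l).prod (gammaMeasure α l) := by
    exact ((indepFun_iff_map_prod_eq_prod_map_map hX.aemeasurable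
      hY.aemeasurable).mp hindep).trans (by rw [hXlaw, hYlaw])
  have hXpos : ∀ᵐ ω ∂P, 0 < X ω := by
    have h0 : P (X ⁻¹' Iic 0) = 0 := by
      rw [← Measure.map_apply hX measurableSet_Iic, hXlaw]; exact gamma_Iic_zero
    rw [ae_iff]
    convert h0 using 2
    ext ω; simp [not_lt]
  have hYpos : ∀ᵐ ω ∂P, 0 < Y ω := by
    have h0 : P (Y ⁻¹' Iic 0) = 0 := by
      rw [← Measure.map_apply hY measurableSet_Iic, hYlaw]; exact gamma_Iic_zero
    rw [ae_iff]
    convert h0 using 2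
    ext ω; simp [not_lt]
  have hnn : 0 ≤ᵐ[P] fun ω => |X ω - Y ω| / (X ω + Y ω) := by
    filter_upwards [hXpos, hYpos] with ω h1 h2
    exact div_nonneg (abs_nonneg _) (by linarith)
  have hm : Measurable fun p : ℝ × ℝ => ENNReal.ofReal (|p.1 - p.2| / (p.1 + p.2)) := by
    fun_prop
  rw [integral_eq_lintegral_of_nonneg_ae hnn
    (((hX.sub hY).abs.div (hX.add hY)).aestronglyMeasurable)]
  have key : ∫⁻ ω, ENNReal.ofReal (|X ω - Y ω| / (X ω + Y ω)) ∂P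
      = ENNReal.ofReal (Real.Gamma (α + 1/2) / (Real.sqrt π * α * Real.Gamma α)) := by
    have e1 : ∫⁻ ω, ENNReal.ofReal (|X ω - Y ω| / (X ω + Y ω)) ∂P
        = ∫⁻ p, ENNReal.ofReal (|p.1 - p.2| / (p.1 + p.2))
            ∂((gammaMeasure α l).prod (gammaMeasure α l)) := by
      rw [← hjoint, lintegral_map hm (hX.prodMk hY)]
    rw [e1, lintegral_prod _ hm.aemeasurable]
    have hpdfm : Measurable (gammaPDF α l) :=
      (measurable_gammaPDFReal α l).ennreal_ofReal
    have inner_eq : ∀ x : ℝ, ∫⁻ y, ENNReal.ofReal (|x - y| / (x + y)) ∂(gammaMeasure α l)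
        = ∫⁻ y in Ioi (0:ℝ), gammaPDF α l y * ENNReal.ofReal (|x - y| / (x + y)) := by
      intro x
      rw [gammaMeasure, lintegral_withDensity_eq_lintegral_mul _ hpdfm (by fun_prop)]
      simp only [Pi.mul_apply]
      exact restrict_pdf_lint _
    calc ∫⁻ x, ∫⁻ y, ENNReal.ofReal (|x - y| / (x + y))
            ∂(gammaMeasure α l) ∂(gammaMeasure α l)
        = ∫⁻ x, (fun x => ∫⁻ y in Ioi (0:ℝ), gammaPDF α l y *
            ENNReal.ofReal (|x - y| / (x + y))) x ∂(gammaMeasure α l) := by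
          exact lintegral_congr fun x => inner_eq x
      _ = ∫⁻ x in Ioi (0:ℝ), gammaPDF α l x * ∫⁻ y in Ioi (0:ℝ), gammaPDF α l y *
            ENNReal.ofReal (|x - y| / (x + y)) := by
          rw [gammaMeasure, lintegral_withDensity_eq_lintegral_mul _ hpdfm ?hm2]
          · simp only [Pi.mul_apply]
            exact restrict_pdf_lint _
          case hm2 =>
            apply Measurable.lintegral_prod_right (f := fun x y => gammaPDF α l y *
              ENNReal.ofReal (|x - y| / (x + y)))
            fun_prop
      _ = ENNReal.ofReal (Real.Gamma (α + 1/2) / (Real.sqrt π * α * Real.Gamma α)) :=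
          main_lint hα hl
  rw [key, ENNReal.toReal_ofReal (by positivity)]
end

section
/- If X ~ Gamma(α₁, λ) and Y ~ Gamma(α₂, λ) are independent with common rate λ, then E[1 − √(XY)/((X+Y)/2)] = 1 − 2·Γ(α₁+1/2)·Γ(α₂+1/2)/((α₁+α₂)·Γ(α₁)·Γ(α₂)). -/
open MeasureTheory Real ProbabilityTheory Set
open scoped ENNReal NNReal
set_option maxHeartbeats 1000000

lemma gammaInt {a r : ℝ} (ha : 0 < a) (hr : 0 < r) :
    IntegrableOn (fun x : ℝ => x ^ (a-1) * exp (-(r * x))) (Ioi 0) := by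
  have := integrableOn_rpow_mul_exp_neg_mul_rpow (p := 1) (s := a - 1) (b := r) (by linarith) zero_lt_one hr
  refine this.congr_fun (fun x hx => ?_) measurableSet_Ioi
  simp only [Real.rpow_one, neg_mul]

lemma lintA {a r : ℝ} (ha : 0 < a) (hr : 0 < r) :
    ∫⁻ x in Ioi (0:ℝ), ENNReal.ofReal (x ^ (a-1) * exp (-(r * x)))
      = ENNReal.ofReal ((1/r) ^ a * Gamma a) := by
  rw [← integral_rpow_mul_exp_neg_mul_Ioi ha hr,
    ofReal_integral_eq_lintegral_ofReal (gammaInt ha hr)]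
  filter_upwards [self_mem_ae_restrict measurableSet_Ioi] with x hx
  have hx0 : (0:ℝ) < x := hx
  positivity

lemma lintB {c : ℝ} (hc : 0 < c) :
    ∫⁻ t in Ioi (0:ℝ), ENNReal.ofReal (exp (-(c * t))) = ENNReal.ofReal (1/c) := by
  have := lintA (a := 1) (r := c) one_pos hc
  simpa [Real.Gamma_one] using this

lemma lintC {s l : ℝ} (hs : 1 < s) (hl : 0 < l) :
    ∫⁻ t in Ioi (0:ℝ), ENNReal.ofReal ((l + t) ^ (-s)) = ENNReal.ofReal (l ^ (1-s) / (s-1)) := by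
  have hshift : ∫⁻ t in Ioi (0:ℝ), ENNReal.ofReal ((l + t) ^ (-s))
      = ∫⁻ u in Ioi l, ENNReal.ofReal (u ^ (-s)) := by
    have h := (measurePreserving_add_left (volume : Measure ℝ) l).setLIntegral_comp_emb
      (measurableEmbedding_addLeft l) (fun u => ENNReal.ofReal (u ^ (-s))) (Ioi 0)
    rw [h, image_const_add_Ioi, add_zero]
  rw [hshift, ← ofReal_integral_eq_lintegral_ofReal (integrableOn_Ioi_rpow_of_lt (by linarith) hl)]
  · rw [integral_Ioi_rpow_of_lt (by linarith) hl]
    congr 1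
    rw [neg_div, ← div_neg]
    ring_nf
  · filter_upwards [self_mem_ae_restrict measurableSet_Ioi] with x hx
    have : (0:ℝ) < x := hl.trans hx
    positivity

lemma lint_pdf_restrict (a r : ℝ) (h : ℝ → ℝ≥0∞) :
    ∫⁻ x, gammaPDF a r x * h x = ∫⁻ x in Ioi 0, gammaPDF a r x * h x := by
  rw [← lintegral_indicator measurableSet_Ioi]
  refine lintegral_congr_ae ?_
  have h0 : ∀ᵐ x : ℝ, x ≠ 0 := by simp [ae_iff]
  filter_upwards [h0] with x hx
  rcases lt_trichotomy x 0 with hlt | heq | hgt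
  · rw [gammaPDF_of_neg hlt, zero_mul,
      indicator_of_notMem (by simp [not_lt, hlt.le] : x ∉ Ioi (0:ℝ))]
  · exact absurd heq hx
  · rw [indicator_of_mem (mem_Ioi.mpr hgt)]

lemma lintD {α₁ α₂ l : ℝ} (hα₁ : 0 < α₁) (hα₂ : 0 < α₂) (hl : 0 < l) :
    ∫⁻ p : ℝ × ℝ, ENNReal.ofReal (Real.sqrt (p.1 * p.2) / ((p.1 + p.2) / 2))
        ∂((gammaMeasure α₁ l).prod (gammaMeasure α₂ l))
      = ENNReal.ofReal (2 * Gamma (α₁ + 1/2) * Gamma (α₂ + 1/2) /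
          ((α₁ + α₂) * Gamma α₁ * Gamma α₂)) := by
  have hG1 : 0 < Gamma α₁ := Gamma_pos_of_pos hα₁
  have hG2 : 0 < Gamma α₂ := Gamma_pos_of_pos hα₂
  have hpdf1m : Measurable (gammaPDF α₁ l) := (measurable_gammaPDFReal α₁ l).ennreal_ofReal
  have hpdf2m : Measurable (gammaPDF α₂ l) := (measurable_gammaPDFReal α₂ l).ennreal_ofReal
  have hm : Measurable fun p : ℝ × ℝ =>
      ENNReal.ofReal (Real.sqrt (p.1 * p.2) / ((p.1 + p.2) / 2)) :=
    ((measurable_fst.mul measurable_snd).sqrt.div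
      ((measurable_fst.add measurable_snd).div_const 2)).ennreal_ofReal
  have inst1 : SFinite (gammaMeasure α₁ l) := by
    have := isProbabilityMeasure_gammaMeasure hα₁ hl; infer_instance
  have inst2 : SFinite (gammaMeasure α₂ l) := by
    have := isProbabilityMeasure_gammaMeasure hα₂ hl; infer_instance
  -- ψ: the closed form of the inner y,t integral factor
  set ψ : ℝ → ℝ := fun t => l ^ α₂ / Gamma α₂ * ((1/(l+t)) ^ (α₂+1/2) * Gamma (α₂+1/2))
    with hψ
  have hψpos : ∀ t : ℝ, 0 < t → 0 < ψ t := by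
    intro t ht
    have hlt : 0 < l + t := by linarith
    rw [hψ]
    positivity
  -- Step 1: unfold to iterated integral with densities, restricted to Ioi 0
  have hm2 : Measurable fun p : ℝ × ℝ =>
      gammaPDF α₂ l p.2 * ENNReal.ofReal (Real.sqrt (p.1 * p.2) / ((p.1 + p.2) / 2)) :=
    (hpdf2m.comp measurable_snd).mul hm
  have h1 : ∫⁻ p : ℝ × ℝ, ENNReal.ofReal (Real.sqrt (p.1 * p.2) / ((p.1 + p.2) / 2))
        ∂((gammaMeasure α₁ l).prod (gammaMeasure α₂ l))
      = ∫⁻ x in Ioi 0, gammaPDF α₁ l x *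
          ∫⁻ y in Ioi 0, gammaPDF α₂ l y *
            ENNReal.ofReal (Real.sqrt (x * y) / ((x + y) / 2)) := by
    rw [lintegral_prod _ hm.aemeasurable]
    have inner : ∀ x : ℝ,
        (∫⁻ y, ENNReal.ofReal (Real.sqrt (x * y) / ((x + y) / 2)) ∂(gammaMeasure α₂ l))
        = ∫⁻ y in Ioi 0, gammaPDF α₂ l y *
            ENNReal.ofReal (Real.sqrt (x * y) / ((x + y) / 2)) := by
      intro x
      have hg : Measurable fun y : ℝ =>
          ENNReal.ofReal (Real.sqrt (x * y) / ((x + y) / 2)) :=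
        (((measurable_const.mul measurable_id).sqrt).div
          ((measurable_const.add measurable_id).div_const 2)).ennreal_ofReal
      rw [gammaMeasure, lintegral_withDensity_eq_lintegral_mul _ hpdf2m hg]
      simp only [Pi.mul_apply]
      exact lint_pdf_restrict _ _ _
    simp_rw [inner]
    have hg' : Measurable fun x : ℝ => ∫⁻ y in Ioi 0, gammaPDF α₂ l y *
        ENNReal.ofReal (Real.sqrt (x * y) / ((x + y) / 2)) :=
      Measurable.lintegral_prod_right' (f := fun p : ℝ × ℝ =>
        gammaPDF α₂ l p.2 * ENNReal.ofReal (Real.sqrt (p.1 * p.2) / ((p.1 + p.2) / 2))) hm2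
    rw [gammaMeasure, lintegral_withDensity_eq_lintegral_mul _ hpdf1m hg']
    simp only [Pi.mul_apply]
    exact lint_pdf_restrict _ _ _
  -- key1: pointwise Frullani-type identity
  have key1 : ∀ x : ℝ, 0 < x → ∀ y : ℝ, 0 < y →
      gammaPDF α₂ l y * ENNReal.ofReal (Real.sqrt (x * y) / ((x + y) / 2))
      = ∫⁻ t in Ioi 0, ENNReal.ofReal ((2 * Real.sqrt x * exp (-(t*x))) *
          (l ^ α₂ / Gamma α₂ * (y ^ (α₂ + 1/2 - 1) * exp (-((l+t)*y))))) := by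
    intro x hx y hy
    have hxy : (0:ℝ) < x + y := by linarith
    have hB : (0:ℝ) ≤ 2 * Real.sqrt x * (l ^ α₂ / Gamma α₂) *
        (y ^ (α₂ + 1/2 - 1) * exp (-(l*y))) := by positivity
    have heq : ∀ t : ℝ, (2 * Real.sqrt x * exp (-(t*x))) *
        (l ^ α₂ / Gamma α₂ * (y ^ (α₂ + 1/2 - 1) * exp (-((l+t)*y))))
        = (2 * Real.sqrt x * (l ^ α₂ / Gamma α₂) *
            (y ^ (α₂ + 1/2 - 1) * exp (-(l*y)))) * exp (-((x+y)*t)) := by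
      intro t
      have e1 : exp (-(t*x)) * exp (-((l+t)*y)) = exp (-(l*y)) * exp (-((x+y)*t)) := by
        rw [← Real.exp_add, ← Real.exp_add]
        ring_nf
      calc (2 * Real.sqrt x * exp (-(t*x))) *
          (l ^ α₂ / Gamma α₂ * (y ^ (α₂ + 1/2 - 1) * exp (-((l+t)*y))))
          = (2 * Real.sqrt x * (l ^ α₂ / Gamma α₂) * y ^ (α₂ + 1/2 - 1)) *
            (exp (-(t*x)) * exp (-((l+t)*y))) := by ring
        _ = _ := by rw [e1]; ring
    simp_rw [heq, ENNReal.ofReal_mul hB, lintegral_const_mul' _ _ ENNReal.ofReal_ne_top,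
      lintB hxy, ← ENNReal.ofReal_mul hB]
    rw [gammaPDF_of_nonneg hy.le, ← ENNReal.ofReal_mul (by positivity)]
    congr 1
    rw [Real.sqrt_mul hx.le, show α₂ + 1/2 - 1 = (α₂ - 1) + (1/2:ℝ) by ring,
      Real.rpow_add hy, ← Real.sqrt_eq_rpow]
    field_simp
  -- key2: the inner y-integral in closed form
  have key2 : ∀ x : ℝ, x ∈ Ioi (0:ℝ) →
      (∫⁻ y in Ioi 0, gammaPDF α₂ l y *
        ENNReal.ofReal (Real.sqrt (x * y) / ((x + y) / 2)))
      = ∫⁻ t in Ioi 0, ENNReal.ofReal ((2 * Real.sqrt x * exp (-(t*x))) * ψ t) := by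
    intro x hx
    rw [setLIntegral_congr_fun_ae measurableSet_Ioi
      (ae_of_all _ (fun y hy => key1 x hx y hy))]
    rw [lintegral_lintegral_swap]
    · refine setLIntegral_congr_fun_ae measurableSet_Ioi (ae_of_all _ (fun t ht => ?_))
      have hlt : (0:ℝ) < l + t := by linarith [mem_Ioi.mp ht]
      have hg0 : (0:ℝ) ≤ 2 * Real.sqrt x * exp (-(t*x)) := by positivity
      have hc0 : (0:ℝ) ≤ l ^ α₂ / Gamma α₂ := by positivity
      simp_rw [ENNReal.ofReal_mul hg0, ENNReal.ofReal_mul hc0,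
        lintegral_const_mul' _ _ ENNReal.ofReal_ne_top,
        lintA (by linarith : (0:ℝ) < α₂ + 1/2) hlt]
      simp only [hψ, ENNReal.ofReal_mul hc0]
    · apply Measurable.aemeasurable
      fun_prop
  have hD0 : (0:ℝ) ≤ 2 * (l ^ α₁ / Gamma α₁) * (l ^ α₂ / Gamma α₂) *
      Gamma (α₁ + 1/2) * Gamma (α₂ + 1/2) := by positivity
  calc ∫⁻ p : ℝ × ℝ, ENNReal.ofReal (Real.sqrt (p.1 * p.2) / ((p.1 + p.2) / 2))
        ∂((gammaMeasure α₁ l).prod (gammaMeasure α₂ l))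
      = ∫⁻ x in Ioi 0, gammaPDF α₁ l x *
          ∫⁻ t in Ioi 0, ENNReal.ofReal ((2 * Real.sqrt x * exp (-(t*x))) * ψ t) := by
        rw [h1]
        exact setLIntegral_congr_fun_ae measurableSet_Ioi
          (ae_of_all _ fun x hx => by rw [key2 x hx])
    _ = ∫⁻ x in Ioi 0, ∫⁻ t in Ioi 0,
          ENNReal.ofReal ((2 * (l ^ α₁ / Gamma α₁) * ((1/(l+t)) ^ (α₂+1/2) *
              (l ^ α₂ / Gamma α₂ * Gamma (α₂+1/2)))) *
            (x ^ (α₁ + 1/2 - 1) * exp (-((l+t)*x)))) := by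
        refine setLIntegral_congr_fun_ae measurableSet_Ioi (ae_of_all _ fun x hx => ?_)
        have hx' : (0:ℝ) < x := hx
        have hne : gammaPDF α₁ l x ≠ ⊤ := by
          rw [gammaPDF]; exact ENNReal.ofReal_ne_top
        rw [← lintegral_const_mul' _ _ hne]
        refine setLIntegral_congr_fun_ae measurableSet_Ioi (ae_of_all _ fun t ht => ?_)
        rw [gammaPDF_of_nonneg hx'.le, ← ENNReal.ofReal_mul (by positivity)]
        congr 1
        simp only [hψ]
        rw [show α₁ + 1/2 - 1 = (α₁ - 1) + (1/2:ℝ) by ring, Real.rpow_add hx',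
          ← Real.sqrt_eq_rpow, show -((l+t)*x) = -(l*x) + -(t*x) by ring, Real.exp_add]
        ring
    _ = ∫⁻ t in Ioi 0, ∫⁻ x in Ioi 0,
          ENNReal.ofReal ((2 * (l ^ α₁ / Gamma α₁) * ((1/(l+t)) ^ (α₂+1/2) *
              (l ^ α₂ / Gamma α₂ * Gamma (α₂+1/2)))) *
            (x ^ (α₁ + 1/2 - 1) * exp (-((l+t)*x)))) := by
        refine lintegral_lintegral_swap ?_
        apply Measurable.aemeasurable
        fun_prop
    _ = ∫⁻ t in Ioi 0, ENNReal.ofReal ((2 * (l ^ α₁ / Gamma α₁) * (l ^ α₂ / Gamma α₂) *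
          Gamma (α₁ + 1/2) * Gamma (α₂ + 1/2)) * (l+t) ^ (-(α₁+α₂+1))) := by
        refine setLIntegral_congr_fun_ae measurableSet_Ioi (ae_of_all _ fun t ht => ?_)
        have hlt : (0:ℝ) < l + t := by linarith [mem_Ioi.mp ht]
        have hc0 : (0:ℝ) ≤ 2 * (l ^ α₁ / Gamma α₁) * ((1/(l+t)) ^ (α₂+1/2) *
            (l ^ α₂ / Gamma α₂ * Gamma (α₂+1/2))) := by positivity
        simp_rw [ENNReal.ofReal_mul hc0, lintegral_const_mul' _ _ ENNReal.ofReal_ne_top,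
          lintA (by linarith : (0:ℝ) < α₁ + 1/2) hlt, ← ENNReal.ofReal_mul hc0]
        congr 1
        rw [one_div, Real.inv_rpow hlt.le, Real.inv_rpow hlt.le, ← Real.rpow_neg hlt.le,
          ← Real.rpow_neg hlt.le,
          show -(α₁+α₂+1) = (-(α₁+1/2)) + (-(α₂+1/2)) by ring, Real.rpow_add hlt]
        ring
    _ = ENNReal.ofReal (2 * (l ^ α₁ / Gamma α₁) * (l ^ α₂ / Gamma α₂) *
          Gamma (α₁ + 1/2) * Gamma (α₂ + 1/2)) *
          ENNReal.ofReal (l ^ (1-(α₁+α₂+1)) / (α₁+α₂+1-1)) := by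
        simp_rw [ENNReal.ofReal_mul hD0, lintegral_const_mul' _ _ ENNReal.ofReal_ne_top,
          lintC (by linarith : (1:ℝ) < α₁+α₂+1) hl]
    _ = ENNReal.ofReal (2 * Gamma (α₁ + 1/2) * Gamma (α₂ + 1/2) /
          ((α₁ + α₂) * Gamma α₁ * Gamma α₂)) := by
        rw [← ENNReal.ofReal_mul hD0]
        congr 1
        have e : l ^ (1 - (α₁+α₂+1)) = (l ^ α₁)⁻¹ * (l ^ α₂)⁻¹ := by
          rw [show (1 - (α₁+α₂+1)) = (-α₁) + (-α₂) by ring, Real.rpow_add hl,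
            Real.rpow_neg hl.le, Real.rpow_neg hl.le]
        rw [e]
        have h1 : (l:ℝ) ^ α₁ ≠ 0 := (Real.rpow_pos_of_pos hl _).ne'
        have h2 : (l:ℝ) ^ α₂ ≠ 0 := (Real.rpow_pos_of_pos hl _).ne'
        have h3 : (α₁:ℝ) + α₂ ≠ 0 := by positivity
        field_simp
        ring
        rw [← add_mul, mul_inv_cancel₀ h3]

lemma gammaMeasure_Iic_zero (a r : ℝ) : gammaMeasure a r (Iic 0) = 0 := by
  rw [gammaMeasure, withDensity_apply _ measurableSet_Iic]
  have h0 : ∀ᵐ x : ℝ, x ≠ 0 := by simp [ae_iff]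
  have : ∀ᵐ x ∂(volume.restrict (Iic 0)), gammaPDF a r x = 0 := by
    filter_upwards [ae_restrict_mem measurableSet_Iic, ae_restrict_of_ae h0] with x hx hx0
    exact gammaPDF_of_neg (lt_of_le_of_ne hx hx0)
  rw [lintegral_congr_ae this, lintegral_zero]


/-- For independent `X ~ Gamma(α₁, λ)`, `Y ~ Gamma(α₂, λ)` with common rate,
`E[1 − √(XY)/((X+Y)/2)] = 1 − 2Γ(α₁+1/2)Γ(α₂+1/2)/((α₁+α₂)Γ(α₁)Γ(α₂))`. -/
theorem atkinson_gamma {Ω : Type*} [MeasurableSpace Ω]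
    (P : Measure Ω) [IsProbabilityMeasure P] (X Y : Ω → ℝ)
    (hX : Measurable X) (hY : Measurable Y)
    (α₁ α₂ l : ℝ) (hα₁ : 0 < α₁) (hα₂ : 0 < α₂) (hl : 0 < l)
    (hXlaw : Measure.map X P = gammaMeasure α₁ l)
    (hYlaw : Measure.map Y P = gammaMeasure α₂ l)
    (hindep : IndepFun X Y P) :
    ∫ ω, (1 - Real.sqrt (X ω * Y ω) / ((X ω + Y ω) / 2)) ∂P
      = 1 - 2 * Real.Gamma (α₁ + 1/2) * Real.Gamma (α₂ + 1/2) /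
          ((α₁ + α₂) * Real.Gamma α₁ * Real.Gamma α₂) := by
  have hG1 : 0 < Gamma α₁ := Gamma_pos_of_pos hα₁
  have hG2 : 0 < Gamma α₂ := Gamma_pos_of_pos hα₂
  have hG1' : 0 < Gamma (α₁ + 1/2) := Gamma_pos_of_pos (by linarith)
  have hG2' : 0 < Gamma (α₂ + 1/2) := Gamma_pos_of_pos (by linarith)
  have hXpos : ∀ᵐ ω ∂P, 0 < X ω := by
    have h0 : P (X ⁻¹' Iic 0) = 0 := by
      rw [← Measure.map_apply hX measurableSet_Iic, hXlaw, gammaMeasure_Iic_zero]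
    rw [ae_iff]
    convert h0 using 2
    ext ω
    simp [not_lt]
  have hYpos : ∀ᵐ ω ∂P, 0 < Y ω := by
    have h0 : P (Y ⁻¹' Iic 0) = 0 := by
      rw [← Measure.map_apply hY measurableSet_Iic, hYlaw, gammaMeasure_Iic_zero]
    rw [ae_iff]
    convert h0 using 2
    ext ω
    simp [not_lt]
  set g : Ω → ℝ := fun ω => Real.sqrt (X ω * Y ω) / ((X ω + Y ω) / 2) with hg
  have hgm : AEStronglyMeasurable g P :=
    (((hX.mul hY).sqrt.div ((hX.add hY).div_const 2))).aestronglyMeasurable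
  have hratio : ∀ x y : ℝ, 0 < x → 0 < y →
      0 ≤ Real.sqrt (x * y) / ((x + y) / 2) ∧
      Real.sqrt (x * y) / ((x + y) / 2) ≤ 1 := by
    intro x y hx hy
    have hxy : (0:ℝ) < (x + y) / 2 := by linarith
    constructor
    · exact div_nonneg (Real.sqrt_nonneg _) hxy.le
    · rw [div_le_one hxy]
      have h1 := sq_nonneg (Real.sqrt x - Real.sqrt y)
      have h2 : Real.sqrt x ^ 2 = x := Real.sq_sqrt hx.le
      have h3 : Real.sqrt y ^ 2 = y := Real.sq_sqrt hy.le
      have h4 : Real.sqrt (x * y) = Real.sqrt x * Real.sqrt y := Real.sqrt_mul hx.le y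
      nlinarith
  have hbound : ∀ᵐ ω ∂P, ‖g ω‖ ≤ 1 := by
    filter_upwards [hXpos, hYpos] with ω hx hy
    obtain ⟨h0, h1⟩ := hratio _ _ hx hy
    rw [Real.norm_eq_abs, abs_of_nonneg h0]
    exact h1
  have hint : Integrable g P :=
    Integrable.mono' (integrable_const 1) hgm hbound
  rw [integral_sub (integrable_const 1) hint, integral_const, probReal_univ, smul_eq_mul, mul_one]
  congr 1
  -- transfer to the product gamma measure
  have hmap : Measure.map (fun ω => (X ω, Y ω)) P
      = (gammaMeasure α₁ l).prod (gammaMeasure α₂ l) := by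
    rw [← hXlaw, ← hYlaw]
    exact (indepFun_iff_map_prod_eq_prod_map_map hX.aemeasurable hY.aemeasurable).mp hindep
  have hFm : Measurable fun p : ℝ × ℝ =>
      Real.sqrt (p.1 * p.2) / ((p.1 + p.2) / 2) :=
    (measurable_fst.mul measurable_snd).sqrt.div
      ((measurable_fst.add measurable_snd).div_const 2)
  have hstep : ∫ ω, g ω ∂P = ∫ p : ℝ × ℝ, Real.sqrt (p.1 * p.2) / ((p.1 + p.2) / 2)
      ∂((gammaMeasure α₁ l).prod (gammaMeasure α₂ l)) := by
    rw [← hmap, integral_map (hX.aemeasurable.prodMk hY.aemeasurable)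
      hFm.aestronglyMeasurable]
  rw [hstep]
  -- nonnegativity a.e. for the product measure
  have hprodpos : ∀ᵐ p : ℝ × ℝ ∂((gammaMeasure α₁ l).prod (gammaMeasure α₂ l)),
      0 ≤ Real.sqrt (p.1 * p.2) / ((p.1 + p.2) / 2) := by
    have inst1 : SFinite (gammaMeasure α₁ l) := by
      have := isProbabilityMeasure_gammaMeasure hα₁ hl; infer_instance
    have inst2 : SFinite (gammaMeasure α₂ l) := by
      have := isProbabilityMeasure_gammaMeasure hα₂ hl; infer_instance
    rw [ae_iff]
    have hsub : {p : ℝ × ℝ | ¬ 0 ≤ Real.sqrt (p.1 * p.2) / ((p.1 + p.2) / 2)}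
        ⊆ (Iic 0 ×ˢ (univ : Set ℝ)) ∪ ((univ : Set ℝ) ×ˢ Iic 0) := by
      intro p hp
      simp only [mem_setOf_eq, not_le] at hp
      by_contra hc
      simp only [mem_union, mem_prod, mem_Iic, mem_univ, and_true, true_and, not_or,
        not_le] at hc
      exact absurd hp (not_lt.mpr (hratio _ _ hc.1 hc.2).1)
    refine measure_mono_null hsub (measure_union_null ?_ ?_)
    · rw [Measure.prod_prod, gammaMeasure_Iic_zero, zero_mul]
    · rw [Measure.prod_prod, gammaMeasure_Iic_zero, mul_zero]
  rw [integral_eq_lintegral_of_nonneg_ae hprodpos hFm.aestronglyMeasurable,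
    lintD hα₁ hα₂ hl, ENNReal.toReal_ofReal (by positivity)]
end
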